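/- Let d ≥ 1 be an integer and p ∈ (0,1), and let D(dp) be the convex set of pmfs on {0,…,d} with mean dp. The extreme points of D(dp) are exactly the following pmfs: (i) for every pair of integers j1, j2 with 0 ≤ j1 < pd < j2 ≤ d, the pmf r_{j1,j2} with r_{j1,j2}(j1) = (j2 − pd)/(j2 − j1), r_{j1,j2}(j2) = (pd − j1)/(j2 − j1), and r_{j1,j2}(j) = 0 otherwise; and (ii) if pd is an integer, additionally the Dirac pmf δ_{pd} concentrated at pd. -/

import Mathlib

open Finset

lemma sum_red2 {n : ℕ} (x f : Fin n → ℝ) (a b : Fin n) (hab : a ≠ b)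
    (h0 : ∀ j, j ≠ a → j ≠ b → x j = 0) :
    ∑ j, f j * x j = f a * x a + f b * x b := by
  have h : ∑ j ∈ ({a, b} : Finset (Fin n)), f j * x j = ∑ j, f j * x j := by
    refine Finset.sum_subset (Finset.subset_univ _) ?_
    intro j _ hj
    simp only [Finset.mem_insert, Finset.mem_singleton] at hj
    push_neg at hj
    rw [h0 j hj.1 hj.2, mul_zero]
  rw [← h, Finset.sum_pair hab]

lemma sum_red2' {n : ℕ} (x : Fin n → ℝ) (a b : Fin n) (hab : a ≠ b)
    (h0 : ∀ j, j ≠ a → j ≠ b → x j = 0) :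
    ∑ j, x j = x a + x b := by
  have := sum_red2 x (fun _ => 1) a b hab h0
  simpa using this

lemma sum_red1 {n : ℕ} (x f : Fin n → ℝ) (a : Fin n)
    (h0 : ∀ j, j ≠ a → x j = 0) :
    ∑ j, f j * x j = f a * x a := by
  have h : ∑ j ∈ ({a} : Finset (Fin n)), f j * x j = ∑ j, f j * x j := by
    refine Finset.sum_subset (Finset.subset_univ _) ?_
    intro j _ hj
    simp only [Finset.mem_singleton] at hj
    rw [h0 j hj, mul_zero]
  rw [← h, Finset.sum_singleton]

lemma sum_red1' {n : ℕ} (x : Fin n → ℝ) (a : Fin n)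
    (h0 : ∀ j, j ≠ a → x j = 0) :
    ∑ j, x j = x a := by
  have := sum_red1 x (fun _ => 1) a h0
  simpa using this

lemma sum_red3 {n : ℕ} (x f : Fin n → ℝ) (a b c : Fin n) (hab : a ≠ b) (hac : a ≠ c)
    (hbc : b ≠ c) (h0 : ∀ j, j ≠ a → j ≠ b → j ≠ c → x j = 0) :
    ∑ j, f j * x j = f a * x a + f b * x b + f c * x c := by
  have h : ∑ j ∈ ({a, b, c} : Finset (Fin n)), f j * x j = ∑ j, f j * x j := by
    refine Finset.sum_subset (Finset.subset_univ _) ?_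
    intro j _ hj
    simp only [Finset.mem_insert, Finset.mem_singleton] at hj
    push_neg at hj
    rw [h0 j hj.1 hj.2.1 hj.2.2, mul_zero]
  rw [← h, Finset.sum_insert (by simp [hab, hac]), Finset.sum_pair hbc, add_assoc]

lemma sum_red3' {n : ℕ} (x : Fin n → ℝ) (a b c : Fin n) (hab : a ≠ b) (hac : a ≠ c)
    (hbc : b ≠ c) (h0 : ∀ j, j ≠ a → j ≠ b → j ≠ c → x j = 0) :
    ∑ j, x j = x a + x b + x c := by
  have := sum_red3 x (fun _ => 1) a b c hab hac hbc h0
  simpa using this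

lemma pair_solve (A B m u v : ℝ) (hAB : A ≠ B) (h1 : u + v = 1) (h2 : A * u + B * v = m) :
    u = (B - m) / (B - A) ∧ v = (m - A) / (B - A) := by
  have h : B - A ≠ 0 := sub_ne_zero.mpr (Ne.symm hAB)
  constructor
  · field_simp
    linear_combination B * h1 - h2
  · field_simp
    linear_combination -A * h1 + h2

lemma two_point_case {n : ℕ} (m : ℝ) (q : Fin n → ℝ) (a b : Fin n)
    (hav : a.val < b.val) (hz : ∀ j, j ≠ a → j ≠ b → q j = 0)
    (hq1 : ∑ j, q j = 1) (hqm : ∑ j, (j.val : ℝ) * q j = m)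
    (hqa : 0 < q a) (hqb : 0 < q b) :
    ((a.val : ℝ) < m ∧ m < b.val) ∧
    q = fun j => if j.val = a.val then ((b.val : ℝ) - m) / ((b.val : ℝ) - (a.val : ℝ))
      else if j.val = b.val then (m - (a.val : ℝ)) / ((b.val : ℝ) - (a.val : ℝ)) else 0 := by
  have hab : a ≠ b := fun h => by simp [h] at hav
  have hAB : ((a.val : ℝ)) ≠ (b.val : ℝ) := by exact_mod_cast hav.ne
  have hBA : (0 : ℝ) < (b.val : ℝ) - (a.val : ℝ) := by
    have : (a.val : ℝ) < (b.val : ℝ) := by exact_mod_cast hav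
    linarith
  have h1 : q a + q b = 1 := by rw [← hq1]; exact (sum_red2' q a b hab hz).symm
  have h2 : (a.val : ℝ) * q a + (b.val : ℝ) * q b = m := by
    rw [← hqm]; exact (sum_red2 q (fun j => (j.val : ℝ)) a b hab hz).symm
  obtain ⟨hu, hv⟩ := pair_solve _ _ _ _ _ hAB h1 h2
  have hmb : m < (b.val : ℝ) := by
    have h3 := mul_pos hqa hBA
    rw [hu, div_mul_cancel₀ _ (ne_of_gt hBA)] at h3
    linarith
  have ham : (a.val : ℝ) < m := by
    have h3 := mul_pos hqb hBA
    rw [hv, div_mul_cancel₀ _ (ne_of_gt hBA)] at h3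
    linarith
  refine ⟨⟨ham, hmb⟩, funext fun j => ?_⟩
  by_cases hja : j = a
  · subst hja; simp [hu]
  · by_cases hjb : j = b
    · subst hjb
      rw [if_neg (by exact_mod_cast hav.ne'), if_pos rfl]
      exact hv
    · rw [if_neg (fun h => hja (Fin.val_injective h)),
        if_neg (fun h => hjb (Fin.val_injective h))]
      exact hz j hja hjb

set_option maxHeartbeats 1000000 in
theorem stmt_3 (d : ℕ) (hd : 1 ≤ d) (p : ℝ) (hp : p ∈ Set.Ioo (0 : ℝ) 1)
    (D : Set (Fin (d + 1) → ℝ))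
    (hD : D = {q : Fin (d + 1) → ℝ |
      (∀ j, 0 ≤ q j) ∧ (∑ j, q j = 1) ∧ (∑ j, (j.val : ℝ) * q j = p * d)})
    (q : Fin (d + 1) → ℝ) :
    q ∈ Set.extremePoints ℝ D ↔
      ((∃ j1 j2 : ℕ, (j1 : ℝ) < p * d ∧ p * d < (j2 : ℝ) ∧ j2 ≤ d ∧
          q = fun j : Fin (d + 1) =>
            if j.val = j1 then ((j2 : ℝ) - p * d) / ((j2 : ℝ) - (j1 : ℝ))
            else if j.val = j2 then (p * d - (j1 : ℝ)) / ((j2 : ℝ) - (j1 : ℝ))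
            else 0) ∨
        (∃ k : ℕ, (k : ℝ) = p * d ∧
          q = fun j : Fin (d + 1) => if j.val = k then 1 else 0)) := by
  obtain ⟨hp0, hp1⟩ := hp
  have hdR : (1 : ℝ) ≤ (d : ℝ) := by exact_mod_cast hd
  have hm0 : 0 < p * d := by positivity
  have hmd : p * d < d := by nlinarith
  subst hD
  rw [mem_extremePoints]
  constructor
  · rintro ⟨⟨hq0, hq1, hqm⟩, hext⟩
    have hex : ∃ a, 0 < q a := by
      by_contra h; push_neg at h
      have hz : ∀ a : Fin (d + 1), q a = 0 := fun a => le_antisymm (h a) (hq0 a)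
      rw [Finset.sum_congr rfl (fun j _ => hz j)] at hq1
      simp at hq1
    obtain ⟨a, hqa⟩ := hex
    by_cases hb : ∃ b, b ≠ a ∧ 0 < q b
    · obtain ⟨b, hba, hqb⟩ := hb
      by_cases hc : ∃ c, c ≠ a ∧ c ≠ b ∧ 0 < q c
      · -- three points of support: contradiction with extremality
        exfalso
        obtain ⟨c, hca, hcb, hqc⟩ := hc
        set v : Fin (d + 1) → ℝ := fun j =>
          if j = a then (b.val : ℝ) - c.val else if j = b then (c.val : ℝ) - a.val
          else if j = c then (a.val : ℝ) - b.val else 0 with hvdef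
        have hva : v a = (b.val : ℝ) - c.val := by simp [hvdef]
        have hvb : v b = (c.val : ℝ) - a.val := by simp [hvdef, hba]
        have hvc : v c = (a.val : ℝ) - b.val := by simp [hvdef, hca, hcb]
        have hv0 : ∀ j, j ≠ a → j ≠ b → j ≠ c → v j = 0 := by
          intro j h1 h2 h3; simp [hvdef, h1, h2, h3]
        have hsv : ∑ j, v j = 0 := by
          rw [sum_red3' v a b c (Ne.symm hba) (Ne.symm hca) (Ne.symm hcb) hv0,
            hva, hvb, hvc]; ring
        have hsjv : ∑ j, (j.val : ℝ) * v j = 0 := by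
          rw [sum_red3 v (fun j => (j.val : ℝ)) a b c (Ne.symm hba) (Ne.symm hca)
            (Ne.symm hcb) hv0, hva, hvb, hvc]; ring
        set m0 : ℝ := min (min (q a) (q b)) (q c) with hm0def
        have hm0p : 0 < m0 := lt_min (lt_min hqa hqb) hqc
        set ε : ℝ := m0 / (d + 1) with hεdef
        have hεp : 0 < ε := by positivity
        have hεd : ε * (d : ℝ) ≤ m0 := by
          rw [hεdef, div_mul_eq_mul_div, div_le_iff₀ (by positivity)]
          nlinarith
        have hjb : ∀ t : Fin (d + 1), (t.val : ℝ) ≤ d := by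
          intro t
          have := Nat.lt_succ_iff.mp t.isLt
          exact_mod_cast this
        have hjb0 : ∀ t : Fin (d + 1), (0 : ℝ) ≤ (t.val : ℝ) := fun t => by positivity
        have habs : ∀ s t : Fin (d + 1),
            -(d : ℝ) ≤ (s.val : ℝ) - (t.val : ℝ) ∧ (s.val : ℝ) - (t.val : ℝ) ≤ (d : ℝ) :=
          fun s t => ⟨by linarith [hjb t, hjb0 s], by linarith [hjb s, hjb0 t]⟩
        have hvbd : ∀ j, |v j| ≤ (d : ℝ) := by
          intro j
          rcases eq_or_ne j a with rfl | h1
          · rw [hva, abs_le]; exact habs _ _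
          rcases eq_or_ne j b with rfl | h2
          · rw [hvb, abs_le]; exact habs _ _
          rcases eq_or_ne j c with rfl | h3
          · rw [hvc, abs_le]; exact habs _ _
          · rw [hv0 j h1 h2 h3]
            simp
        have hmle : ∀ j, j = a ∨ j = b ∨ j = c → m0 ≤ q j := by
          rintro j (rfl | rfl | rfl)
          · exact le_trans (min_le_left _ _) (min_le_left _ _)
          · exact le_trans (min_le_left _ _) (min_le_right _ _)
          · exact min_le_right _ _
        have hnn : ∀ j, |ε * v j| ≤ q j := by
          intro j
          by_cases hj : j = a ∨ j = b ∨ j = c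
          · have h1 := hmle j hj
            have h2 : |ε * v j| ≤ ε * d := by
              rw [abs_mul, abs_of_pos hεp]
              exact mul_le_mul_of_nonneg_left (hvbd j) hεp.le
            linarith
          · push_neg at hj
            rw [hv0 j hj.1 hj.2.1 hj.2.2]
            simpa using hq0 j
        have hnn1 : ∀ j, 0 ≤ q j + ε * v j := by
          intro j
          have := abs_le.mp (le_refl |ε * v j|)
          have h := neg_abs_le (ε * v j)
          linarith [hnn j]
        have hnn2 : ∀ j, 0 ≤ q j - ε * v j := by
          intro j
          have h := le_abs_self (ε * v j)
          linarith [hnn j]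
        set x1 : Fin (d + 1) → ℝ := fun j => q j + ε * v j with hx1def
        set x2 : Fin (d + 1) → ℝ := fun j => q j - ε * v j with hx2def
        have hx1mem : x1 ∈ {q : Fin (d + 1) → ℝ |
            (∀ j, 0 ≤ q j) ∧ (∑ j, q j = 1) ∧ (∑ j, (j.val : ℝ) * q j = p * d)} := by
          refine ⟨fun j => hnn1 j, ?_, ?_⟩
          · rw [hx1def]
            simp only
            rw [Finset.sum_add_distrib, hq1, ← Finset.mul_sum, hsv]; ring
          · rw [hx1def]
            simp only
            have : ∀ j : Fin (d + 1), (j.val : ℝ) * (q j + ε * v j)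
                = (j.val : ℝ) * q j + ε * ((j.val : ℝ) * v j) := fun j => by ring
            rw [Finset.sum_congr rfl (fun j _ => this j), Finset.sum_add_distrib,
              hqm, ← Finset.mul_sum, hsjv]; ring
        have hx2mem : x2 ∈ {q : Fin (d + 1) → ℝ |
            (∀ j, 0 ≤ q j) ∧ (∑ j, q j = 1) ∧ (∑ j, (j.val : ℝ) * q j = p * d)} := by
          refine ⟨fun j => hnn2 j, ?_, ?_⟩
          · rw [hx2def]
            simp only
            rw [Finset.sum_sub_distrib, hq1, ← Finset.mul_sum, hsv]; ring
          · rw [hx2def]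
            simp only
            have : ∀ j : Fin (d + 1), (j.val : ℝ) * (q j - ε * v j)
                = (j.val : ℝ) * q j - ε * ((j.val : ℝ) * v j) := fun j => by ring
            rw [Finset.sum_congr rfl (fun j _ => this j), Finset.sum_sub_distrib,
              hqm, ← Finset.mul_sum, hsjv]; ring
        have hseg : q ∈ openSegment ℝ x1 x2 := by
          refine ⟨1/2, 1/2, by norm_num, by norm_num, by norm_num, ?_⟩
          funext j
          simp only [hx1def, hx2def, Pi.add_apply, Pi.smul_apply, smul_eq_mul]
          ring
        have hx1q := (hext x1 hx1mem x2 hx2mem hseg).1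
        have := congrFun hx1q a
        rw [hx1def] at this
        simp only at this
        have hεva : ε * v a = 0 := by linarith
        have hvane : v a ≠ 0 := by
          rw [hva]
          have : b.val ≠ c.val := fun h => hcb (Fin.val_injective h.symm)
          have : (b.val : ℝ) ≠ (c.val : ℝ) := by exact_mod_cast this
          exact sub_ne_zero.mpr this
        exact hvane (by rcases mul_eq_zero.mp hεva with h | h
                        · exact absurd h (ne_of_gt hεp)
                        · exact h)
      · -- exactly two support points
        push_neg at hc
        have hz : ∀ j, j ≠ a → j ≠ b → q j = 0 := fun j h1 h2 =>
          le_antisymm (hc j h1 h2) (hq0 j)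
        rcases lt_or_gt_of_ne (fun h : a.val = b.val => hba (Fin.val_injective h).symm)
          with hlt | hgt
        · obtain ⟨⟨ham, hmb⟩, hqeq⟩ := two_point_case (p * d) q a b hlt hz hq1 hqm hqa hqb
          exact Or.inl ⟨a.val, b.val, ham, hmb, Nat.lt_succ_iff.mp b.isLt, hqeq⟩
        · obtain ⟨⟨ham, hmb⟩, hqeq⟩ := two_point_case (p * d) q b a hgt
            (fun j h1 h2 => hz j h2 h1) hq1 hqm hqb hqa
          exact Or.inl ⟨b.val, a.val, ham, hmb, Nat.lt_succ_iff.mp a.isLt, hqeq⟩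
    · -- one support point
      push_neg at hb
      have hz : ∀ j, j ≠ a → q j = 0 := fun j h1 => le_antisymm (hb j h1) (hq0 j)
      have hqa1 : q a = 1 := by rw [← hq1, sum_red1' q a hz]
      have hka : (a.val : ℝ) = p * d := by
        rw [← hqm, sum_red1 q (fun j => (j.val : ℝ)) a hz, hqa1, mul_one]
      refine Or.inr ⟨a.val, hka, funext fun j => ?_⟩
      by_cases hja : j = a
      · subst hja; simp [hqa1]
      · rw [if_neg (fun h => hja (Fin.val_injective h))]
        exact hz j hja
  · rintro (⟨j1, j2, hj1, hj2, hj2d, hqeq⟩ | ⟨k, hk, hqeq⟩)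
    · -- two-point pmf is extreme
      have hj1d : j1 < d + 1 := by
        have h1 : (j1 : ℝ) < (d : ℝ) := lt_trans hj1 hmd
        have : j1 < d := by exact_mod_cast h1
        omega
      have hj12R : (j1 : ℝ) < (j2 : ℝ) := lt_trans hj1 hj2
      have hj12 : j1 < j2 := by exact_mod_cast hj12R
      have hsub : (0 : ℝ) < (j2 : ℝ) - (j1 : ℝ) := by linarith
      set J1 : Fin (d + 1) := ⟨j1, hj1d⟩ with hJ1def
      set J2 : Fin (d + 1) := ⟨j2, by omega⟩ with hJ2def
      have hJne : J1 ≠ J2 := fun h => by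
        have : j1 = j2 := congrArg Fin.val h
        omega
      have hqJ1 : q J1 = ((j2 : ℝ) - p * d) / ((j2 : ℝ) - (j1 : ℝ)) := by
        rw [hqeq]; simp [hJ1def]
      have hne12 : j2 ≠ j1 := by omega
      have hqJ2 : q J2 = (p * d - (j1 : ℝ)) / ((j2 : ℝ) - (j1 : ℝ)) := by
        rw [hqeq]
        simp [hJ2def, hne12]
      have hqz : ∀ j, j ≠ J1 → j ≠ J2 → q j = 0 := by
        intro j h1 h2
        rw [hqeq]
        simp only
        rw [if_neg (fun h => h1 (Fin.ext h)), if_neg (fun h => h2 (Fin.ext h))]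
      have hqmem : q ∈ {q : Fin (d + 1) → ℝ |
          (∀ j, 0 ≤ q j) ∧ (∑ j, q j = 1) ∧ (∑ j, (j.val : ℝ) * q j = p * d)} := by
        refine ⟨?_, ?_, ?_⟩
        · intro j
          rw [hqeq]
          simp only
          split_ifs
          · exact le_of_lt (div_pos (by linarith) hsub)
          · exact le_of_lt (div_pos (by linarith) hsub)
          · exact le_rfl
        · rw [sum_red2' q J1 J2 hJne hqz, hqJ1, hqJ2]
          field_simp
          ring
        · rw [sum_red2 q (fun j => (j.val : ℝ)) J1 J2 hJne hqz, hqJ1, hqJ2]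
          show (j1 : ℝ) * _ + (j2 : ℝ) * _ = _
          field_simp
          ring
      refine ⟨hqmem, ?_⟩
      rintro x ⟨hx0, hx1, hxm⟩ y ⟨hy0, hy1, hym⟩ ⟨α, β, hα, hβ, hαβ, hsum⟩
      have hdet : ∀ z : Fin (d + 1) → ℝ, (∀ j, 0 ≤ z j) → (∑ j, z j = 1) →
          (∑ j, (j.val : ℝ) * z j = p * d) → (∀ j, j ≠ J1 → j ≠ J2 → z j = 0) → z = q := by
        intro z hz0 hz1 hzm hzz
        have h1 : z J1 + z J2 = 1 := by rw [← hz1, sum_red2' z J1 J2 hJne hzz]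
        have h2 : (j1 : ℝ) * z J1 + (j2 : ℝ) * z J2 = p * d := by
          rw [← hzm, sum_red2 z (fun j => (j.val : ℝ)) J1 J2 hJne hzz]
        obtain ⟨hu, hv⟩ := pair_solve (j1 : ℝ) (j2 : ℝ) (p * d) (z J1) (z J2)
          (ne_of_lt hj12R) h1 h2
        funext j
        by_cases hja : j = J1
        · subst hja; rw [hu, hqJ1]
        · by_cases hjb : j = J2
          · subst hjb; rw [hv, hqJ2]
          · rw [hzz j hja hjb, hqz j hja hjb]
      have hzboth : ∀ j, j ≠ J1 → j ≠ J2 → x j = 0 ∧ y j = 0 := by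
        intro j h1 h2
        have hq0j : q j = 0 := hqz j h1 h2
        have hcomb : α * x j + β * y j = 0 := by
          have := congrFun hsum j
          simp only [Pi.add_apply, Pi.smul_apply, smul_eq_mul] at this
          rw [this, hq0j]
        have hax : α * x j = 0 := le_antisymm
          (by linarith [mul_nonneg hβ.le (hy0 j)]) (mul_nonneg hα.le (hx0 j))
        have hay : β * y j = 0 := by linarith
        exact ⟨(mul_eq_zero.mp hax).resolve_left (ne_of_gt hα),
          (mul_eq_zero.mp hay).resolve_left (ne_of_gt hβ)⟩
      exact ⟨hdet x hx0 hx1 hxm (fun j h1 h2 => (hzboth j h1 h2).1),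
        hdet y hy0 hy1 hym (fun j h1 h2 => (hzboth j h1 h2).2)⟩
    · -- Dirac pmf is extreme
      have hkd : k < d + 1 := by
        have h1 : (k : ℝ) < (d : ℝ) := hk ▸ hmd
        have : k < d := by exact_mod_cast h1
        omega
      set K : Fin (d + 1) := ⟨k, hkd⟩ with hKdef
      have hqK : q K = 1 := by rw [hqeq]; simp [hKdef]
      have hqz : ∀ j, j ≠ K → q j = 0 := by
        intro j h1
        rw [hqeq]
        simp only
        rw [if_neg (fun h => h1 (Fin.ext h))]
      have hqmem : q ∈ {q : Fin (d + 1) → ℝ |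
          (∀ j, 0 ≤ q j) ∧ (∑ j, q j = 1) ∧ (∑ j, (j.val : ℝ) * q j = p * d)} := by
        refine ⟨?_, ?_, ?_⟩
        · intro j
          rw [hqeq]; simp only
          split_ifs
          · norm_num
          · exact le_rfl
        · rw [sum_red1' q K hqz, hqK]
        · rw [sum_red1 q (fun j => (j.val : ℝ)) K hqz, hqK, mul_one]
          exact hk
      refine ⟨hqmem, ?_⟩
      rintro x ⟨hx0, hx1, hxm⟩ y ⟨hy0, hy1, hym⟩ ⟨α, β, hα, hβ, hαβ, hsum⟩
      have hzboth : ∀ j, j ≠ K → x j = 0 ∧ y j = 0 := by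
        intro j h1
        have hq0j : q j = 0 := hqz j h1
        have hcomb : α * x j + β * y j = 0 := by
          have := congrFun hsum j
          simp only [Pi.add_apply, Pi.smul_apply, smul_eq_mul] at this
          rw [this, hq0j]
        have hax : α * x j = 0 := le_antisymm
          (by linarith [mul_nonneg hβ.le (hy0 j)]) (mul_nonneg hα.le (hx0 j))
        have hay : β * y j = 0 := by linarith
        exact ⟨(mul_eq_zero.mp hax).resolve_left (ne_of_gt hα),
          (mul_eq_zero.mp hay).resolve_left (ne_of_gt hβ)⟩
      have hdet : ∀ z : Fin (d + 1) → ℝ, (∑ j, z j = 1) →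
          (∀ j, j ≠ K → z j = 0) → z = q := by
        intro z hz1 hzz
        funext j
        by_cases hja : j = K
        · subst hja
          rw [hqK, ← hz1, sum_red1' z K hzz]
        · rw [hzz j hja, hqz j hja]
      exact ⟨hdet x hx1 (fun j h1 => (hzboth j h1).1),
        hdet y hy1 (fun j h1 => (hzboth j h1).2)⟩
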